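/- arXiv:1812.06477 — 6 statements merged into one kernel-verified Lean document; each statement's English description precedes it below -/
import Mathlib

section
/- Let G be a finite simple graph without isolated vertices on vertex set V. Then the Z-Grundy domination number and the zero forcing number of G satisfy γ^Z_gr(G) + Z(G) = |V|. -/
/-- One step of the zero forcing colour-change rule: some black vertex `v ∈ S`
whose unique white neighbour is `w` forces `w`, giving `T = insert w S`. -/
def zfStep {V : Type*} [DecidableEq V] (G : SimpleGraph V) (S T : Finset V) : Prop :=
  ∃ v ∈ S, ∃ w, w ∉ S ∧ G.Adj v w ∧ (∀ u, G.Adj v u → u ∉ S → u = w) ∧ T = insert w S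

/-- `S` is a zero forcing set: iterating the colour-change rule from `S` reaches all of `V`. -/
def IsZeroForcingSet {V : Type*} [DecidableEq V] [Fintype V] (G : SimpleGraph V)
    (S : Finset V) : Prop :=
  Relation.ReflTransGen (zfStep G) S Finset.univ

/-- The zero forcing number: minimum size of a zero forcing set. -/
noncomputable def zeroForcingNumber {V : Type*} [DecidableEq V] [Fintype V]
    (G : SimpleGraph V) : ℕ :=
  sInf {k | ∃ S : Finset V, IsZeroForcingSet G S ∧ S.card = k}

/-- `(v 0, …, v (k-1))` is a Z-sequence: each `v i` has a neighbour outside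
`⋃_{j<i} N[v j]`. -/
def IsZSeq {V : Type*} (G : SimpleGraph V) {k : ℕ} (v : Fin k → V) : Prop :=
  ∀ i : Fin k, ∃ x, G.Adj (v i) x ∧ ∀ j : Fin k, j < i → x ≠ v j ∧ ¬ G.Adj (v j) x

/-- `w` is a witness sequence for the Z-sequence `v`: each `w i` is a neighbour of `v i`
lying outside `⋃_{j<i} N[v j]`. -/
def IsWitnessSeq {V : Type*} (G : SimpleGraph V) {k : ℕ} (v w : Fin k → V) : Prop :=
  ∀ i : Fin k, G.Adj (v i) (w i) ∧ ∀ j : Fin k, j < i → w i ≠ v j ∧ ¬ G.Adj (v j) (w i)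

/-- The Z-Grundy domination number: maximum length of a Z-sequence. -/
noncomputable def zGrundyNumber {V : Type*} [Fintype V] (G : SimpleGraph V) : ℕ :=
  sSup {k | ∃ v : Fin k → V, IsZSeq G v}


lemma forcingOfWitness {V : Type*} [Fintype V] [DecidableEq V] (G : SimpleGraph V) :
    ∀ (k : ℕ) (v w : Fin k → V), IsWitnessSeq G v w →
      Relation.ReflTransGen (zfStep G)
        (Finset.univ \ Finset.image w Finset.univ) Finset.univ := by
  intro k
  induction k with
  | zero =>
      intro v w _
      simp only [Finset.univ_eq_empty, Finset.image_empty, Finset.sdiff_empty]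
      exact Relation.ReflTransGen.refl
  | succ k ih =>
      intro v w hw
      set v' : Fin k → V := v ∘ Fin.succ with hv'
      set w' : Fin k → V := w ∘ Fin.succ with hw'def
      have hw' : IsWitnessSeq G v' w' := by
        intro i
        refine ⟨(hw i.succ).1, fun j hj => (hw i.succ).2 j.succ ?_⟩
        exact Fin.succ_lt_succ_iff.mpr hj
      have himg : Finset.image w Finset.univ =
          insert (w 0) (Finset.image w' Finset.univ) := by
        ext a
        simp only [Finset.mem_image, Finset.mem_univ, true_and, Finset.mem_insert,
          Fin.exists_fin_succ, hw'def, Function.comp]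
        tauto
      have hne0 : ∀ j : Fin (k+1), 0 < j → w j ≠ w 0 := by
        intro j hj heq
        exact ((hw j).2 0 hj).2 (heq ▸ (hw 0).1)
      have hw0not : w 0 ∉ Finset.image w' Finset.univ := by
        simp only [Finset.mem_image, Finset.mem_univ, true_and, hw'def, Function.comp]
        rintro ⟨i, hi⟩
        exact hne0 i.succ (Fin.succ_pos i) hi
      have hstep : zfStep G (Finset.univ \ Finset.image w Finset.univ)
          (Finset.univ \ Finset.image w' Finset.univ) := by
        refine ⟨v 0, ?_, w 0, ?_, (hw 0).1, ?_, ?_⟩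
        · simp only [Finset.mem_sdiff, Finset.mem_univ, true_and, Finset.mem_image]
          rintro ⟨j, hj⟩
          by_cases h0 : j = 0
          · subst h0; exact G.ne_of_adj (hw 0).1 hj.symm
          · exact ((hw j).2 0 (Fin.pos_iff_ne_zero.mpr h0)).1 hj
        · simp only [Finset.mem_sdiff, Finset.mem_univ, true_and, not_not]
          exact Finset.mem_image_of_mem w (Finset.mem_univ 0)
        · intro u hu hus
          simp only [Finset.mem_sdiff, Finset.mem_univ, true_and, not_not,
            Finset.mem_image] at hus
          obtain ⟨j, hj⟩ := hus
          by_cases h0 : j = 0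
          · subst h0; exact hj.symm
          · rw [← hj] at hu
            exact absurd hu ((hw j).2 0 (Fin.pos_iff_ne_zero.mpr h0)).2
        · ext u
          simp only [himg, Finset.mem_insert, Finset.mem_sdiff, Finset.mem_univ,
            true_and]
          constructor
          · intro hu
            by_cases h0 : u = w 0
            · exact Or.inl h0
            · exact Or.inr (fun hc => hc.elim h0 hu)
          · rintro (rfl | hu)
            · exact hw0not
            · exact fun hc => hu (Or.inr hc)
      exact Relation.ReflTransGen.head hstep (ih v' w' hw')


lemma witnessOfForcing {V : Type*} [Fintype V] [DecidableEq V] (G : SimpleGraph V)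
    (S : Finset V) (hS : Relation.ReflTransGen (zfStep G) S Finset.univ) :
    ∃ (k : ℕ) (v w : Fin k → V), IsWitnessSeq G v w ∧ (∀ i, w i ∉ S) ∧
      S.card + k = Fintype.card V := by
  induction hS using Relation.ReflTransGen.head_induction_on with
  | refl =>
      exact ⟨0, Fin.elim0, Fin.elim0, fun i => i.elim0, fun i => i.elim0,
        by simp⟩
  | head hstep _ ih =>
      rename_i A B hAB
      obtain ⟨v0, hv0A, w0, hw0A, hadj, huniq, hB⟩ := hstep
      obtain ⟨k, v, w, hw, hws, hcard⟩ := ih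
      refine ⟨k + 1, Fin.cons v0 v, Fin.cons w0 w, ?_, ?_, ?_⟩
      · intro i
        rcases Fin.eq_zero_or_eq_succ i with rfl | ⟨i', rfl⟩
        · exact ⟨by simpa using hadj, fun j hj => absurd hj (Fin.not_lt_zero j)⟩
        · refine ⟨by simpa using (hw i').1, fun j hj => ?_⟩
          rcases Fin.eq_zero_or_eq_succ j with rfl | ⟨j', rfl⟩
          · have hwi'B : w i' ∉ B := hws i'
            have hwi'A : w i' ∉ A := fun hc => hwi'B (hB ▸ Finset.mem_insert_of_mem hc)
            simp only [Fin.cons_zero, Fin.cons_succ]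
            constructor
            · exact fun hc => hwi'A (hc ▸ hv0A)
            · intro hc
              have := huniq _ hc hwi'A
              exact hwi'B (this ▸ hB ▸ Finset.mem_insert_self w0 A)
          · simp only [Fin.cons_succ]
            exact (hw i').2 j' (Fin.succ_lt_succ_iff.mp hj)
      · intro i
        rcases Fin.eq_zero_or_eq_succ i with rfl | ⟨i', rfl⟩
        · simpa using hw0A
        · simp only [Fin.cons_succ]
          exact fun hc => hws i' (hB ▸ Finset.mem_insert_of_mem hc)
      · have : B.card = A.card + 1 := by
          rw [hB, Finset.card_insert_of_notMem hw0A]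
        omega


/-- If `G` is a finite simple graph without isolated vertices on vertex set `V`, then
`γ^Z_gr(G) + Z(G) = |V|`. -/
theorem zGrundy_add_zeroForcing {V : Type*} [Fintype V] [DecidableEq V]
    (G : SimpleGraph V) (h : ∀ v : V, ∃ u : V, G.Adj v u) :
    zGrundyNumber G + zeroForcingNumber G = Fintype.card V := by
  classical
  set n := Fintype.card V with hn
  have toWitness : ∀ {k : ℕ} (v : Fin k → V), IsZSeq G v →
      ∃ w : Fin k → V, IsWitnessSeq G v w := by
    intro k v hv
    exact ⟨fun i => (hv i).choose, fun i =>
      ⟨(hv i).choose_spec.1, (hv i).choose_spec.2⟩⟩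
  have winj : ∀ {k : ℕ} (v w : Fin k → V), IsWitnessSeq G v w →
      Function.Injective w := by
    intro k v w hw i j hij
    by_contra hne
    rcases lt_or_gt_of_ne hne with hlt | hlt
    · refine ((hw j).2 i hlt).2 ?_
      rw [← hij]; exact (hw i).1
    · refine ((hw i).2 j hlt).2 ?_
      rw [hij]; exact (hw j).1
  have hbdd : BddAbove {k | ∃ v : Fin k → V, IsZSeq G v} := by
    refine ⟨n, fun k hk => ?_⟩
    obtain ⟨v, hv⟩ := hk
    obtain ⟨w, hw⟩ := toWitness v hv
    have := Fintype.card_le_of_injective w (winj v w hw)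
    simpa using this
  have hA0 : 0 ∈ {k | ∃ v : Fin k → V, IsZSeq G v} :=
    ⟨Fin.elim0, fun i => i.elim0⟩
  have hγmem : zGrundyNumber G ∈ {k | ∃ v : Fin k → V, IsZSeq G v} :=
    Nat.sSup_mem ⟨0, hA0⟩ hbdd
  obtain ⟨v, hv⟩ := hγmem
  obtain ⟨w, hw⟩ := toWitness v hv
  have hγle : zGrundyNumber G ≤ n := by
    have := Fintype.card_le_of_injective w (winj v w hw)
    simpa using this
  have hcardS0 : (Finset.univ \ Finset.image w Finset.univ).card = n - zGrundyNumber G := by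
    rw [Finset.card_sdiff_of_subset (Finset.subset_univ _), Finset.card_univ,
      Finset.card_image_of_injective _ (winj v w hw), Finset.card_univ,
      Fintype.card_fin]
  have hZle : zeroForcingNumber G ≤ n - zGrundyNumber G :=
    Nat.sInf_le ⟨Finset.univ \ Finset.image w Finset.univ,
      forcingOfWitness G _ v w hw, hcardS0⟩
  have hZmem : zeroForcingNumber G ∈
      {k | ∃ S : Finset V, IsZeroForcingSet G S ∧ S.card = k} :=
    Nat.sInf_mem ⟨n, Finset.univ, Relation.ReflTransGen.refl, Finset.card_univ⟩
  obtain ⟨S, hSforce, hScard⟩ := hZmem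
  obtain ⟨k', v', w', hwit', -, hcard'⟩ := witnessOfForcing G S hSforce
  have hk'γ : k' ≤ zGrundyNumber G :=
    le_csSup hbdd ⟨v', fun i => ⟨w' i, (hwit' i).1, (hwit' i).2⟩⟩
  omega
end

section
/- Let G be a finite simple graph on vertex set V, let S = (v_1,…,v_k) be a Z-sequence of G, and let W = (w_1,…,w_k) be a witness sequence for S. Then V \ {w_1,…,w_k} is a zero forcing set of G. -/
/-- If `S = (v 0, …, v (k-1))` is a Z-sequence of `G` with witness sequence
`W = (w 0, …, w (k-1))`, then `V \ {w 0, …, w (k-1)}` is a zero forcing set of `G`. -/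
theorem compl_witness_isZeroForcingSet {V : Type*} [Fintype V] [DecidableEq V]
    (G : SimpleGraph V) {k : ℕ} (v w : Fin k → V)
    (hv : IsZSeq G v) (hw : IsWitnessSeq G v w) :
    IsZeroForcingSet G (Finset.univ \ Finset.image w Finset.univ) := by
  classical
  -- witnesses are pairwise distinct (later ones differ from earlier ones)
  have hwne : ∀ i j : Fin k, i < j → w j ≠ w i := by
    intro i j hij h
    exact ((hw j).2 i hij).2 (h ▸ (hw i).1)
  -- the tower of black sets
  set T : ℕ → Finset V :=
    fun n => Finset.univ \ Finset.image w (Finset.univ.filter fun j : Fin k => n ≤ (j : ℕ))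
    with hT
  have hmem : ∀ n (x : V), x ∈ T n ↔ ∀ j : Fin k, n ≤ (j : ℕ) → x ≠ w j := by
    intro n x
    simp only [hT, Finset.mem_sdiff, Finset.mem_univ, true_and, Finset.mem_image,
      Finset.mem_filter, not_exists, not_and]
    constructor
    · intro h j hj hx; exact h j hj hx.symm
    · intro h j hj hx; exact h j hj hx.symm
  have hstep : ∀ n, n < k → zfStep G (T n) (T (n + 1)) := by
    intro n hn
    set i : Fin k := ⟨n, hn⟩ with hi
    refine ⟨v i, ?_, w i, ?_, (hw i).1, ?_, ?_⟩
    · rw [hmem]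
      intro j hj hvw
      rcases lt_or_eq_of_le (show i ≤ j from hj) with hlt | heq
      · exact ((hw j).2 i hlt).1 hvw.symm
      · have h1 : G.Adj (v j) (w j) := heq ▸ (hw i).1
        have h2 : v j = w j := heq ▸ hvw
        exact G.irrefl (h2 ▸ h1)
    · rw [hmem]
      push_neg
      exact ⟨i, le_refl _, rfl⟩
    · intro u hadj hu
      rw [hmem] at hu
      push_neg at hu
      obtain ⟨j, hj, huj⟩ := hu
      rcases lt_or_eq_of_le (show i ≤ j from hj) with hlt | heq
      · exact absurd (huj ▸ hadj) ((hw j).2 i hlt).2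
      · rw [huj, ← heq]
    · ext x
      rw [Finset.mem_insert, hmem, hmem]
      constructor
      · intro h
        by_cases hx : x = w i
        · exact Or.inl hx
        · refine Or.inr fun j hj => ?_
          rcases lt_or_eq_of_le (show i ≤ j from hj) with hlt | heq
          · exact h j hlt
          · rw [← heq]; exact hx
      · rintro (rfl | h) j hj
        · exact (hwne i j hj).symm
        · exact h j (Nat.le_of_succ_le hj)
  have hchain : ∀ d n, n + d ≤ k → Relation.ReflTransGen (zfStep G) (T n) (T (n + d)) := by
    intro d
    induction d with
    | zero => intro n _; exact Relation.ReflTransGen.refl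
    | succ d ih =>
        intro n h
        have h1 : n < k := by omega
        have h2 : n + (d + 1) = n + 1 + d := by omega
        rw [h2]
        exact Relation.ReflTransGen.trans
          (Relation.ReflTransGen.single (hstep n h1)) (ih (n + 1) (by omega))
  have hT0 : T 0 = Finset.univ \ Finset.image w Finset.univ := by
    simp [hT]
  have hTk : T k = Finset.univ := by
    ext x
    simp only [hmem, Finset.mem_univ, iff_true]
    intro j hj
    exact absurd hj (by omega)
  have := hchain k 0 (by omega)
  rw [hT0, Nat.zero_add, hTk] at this
  exact this
end

section
/- Let G be a finite simple graph on vertex set V and let B be a zero forcing set of G with |B| = |V| − k. Then there exists a Z-sequence (v_1,…,v_k) of G together with a witness sequence (w_1,…,w_k) such that {w_1,…,w_k} = V \ B. -/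
lemma zf_chain {V : Type*} [DecidableEq V] (G : SimpleGraph V) {S T : Finset V}
    (h : Relation.ReflTransGen (zfStep G) S T) :
    ∃ (m : ℕ) (u w : Fin m → V),
      (∀ i, u i ∈ S ∨ ∃ j, j < i ∧ u i = w j) ∧
      (∀ i, w i ∉ S ∧ ∀ j, j < i → w i ≠ w j) ∧
      (∀ i, G.Adj (u i) (w i)) ∧
      (∀ i x, G.Adj (u i) x → x ∉ S → (∀ j, j < i → x ≠ w j) → x = w i) ∧
      T = S ∪ Finset.image w Finset.univ := by
  induction h using Relation.ReflTransGen.head_induction_on with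
  | refl => exact ⟨0, Fin.elim0, Fin.elim0, fun i => i.elim0, fun i => i.elim0,
      fun i => i.elim0, fun i => i.elim0, by simp⟩
  | @head S₁ S₂ hstep htail ih =>
    obtain ⟨v, hv, wv, hwv, hadj, huniq, rfl⟩ := hstep
    obtain ⟨m, u', w', P1, P2, P3, P4, P5⟩ := ih
    refine ⟨m + 1, Fin.cons v u', Fin.cons wv w', ?_, ?_, ?_, ?_, ?_⟩
    · intro i
      refine Fin.cases ?_ ?_ i
      · exact Or.inl (by simpa using hv)
      · intro j
        rcases P1 j with hj | ⟨j', hj', hj'eq⟩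
        · simp only [Finset.mem_insert] at hj
          rcases hj with hj | hj
          · exact Or.inr ⟨0, Fin.succ_pos j, by simpa using hj⟩
          · exact Or.inl (by simpa using hj)
        · exact Or.inr ⟨j'.succ, by simpa [Fin.succ_lt_succ_iff] using hj',
            by simpa using hj'eq⟩
    · intro i
      refine Fin.cases ?_ ?_ i
      · exact ⟨by simpa using hwv, fun j hj => absurd hj (Fin.not_lt_zero j)⟩
      · intro j
        have h2 := P2 j
        simp only [Finset.mem_insert, not_or] at h2
        refine ⟨by simpa using h2.1.2, ?_⟩
        intro j'
        refine Fin.cases ?_ ?_ j'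
        · intro _; simpa using h2.1.1
        · intro j'' hj''
          have hlt : j'' < j := by simpa [Fin.succ_lt_succ_iff] using hj''
          simpa using h2.2 j'' hlt
    · intro i
      refine Fin.cases ?_ ?_ i
      · simpa using hadj
      · intro j; simpa using P3 j
    · intro i
      refine Fin.cases ?_ ?_ i
      · intro x hx hxS _
        simpa using huniq x (by simpa using hx) hxS
      · intro j x hx hxS hne
        have hxwv : x ≠ wv := by simpa using hne 0 (Fin.succ_pos j)
        have hxS' : x ∉ insert wv S₁ := by simp [hxS, hxwv]
        have : x = w' j := by
          refine P4 j x (by simpa using hx) hxS' ?_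
          intro j' hj'
          simpa using hne j'.succ (by simpa [Fin.succ_lt_succ_iff] using hj')
        simpa using this
    · rw [P5]
      have : Finset.image (Fin.cons wv w') Finset.univ
          = insert wv (Finset.image w' Finset.univ) := by
        rw [Fin.univ_succ, Finset.cons_eq_insert, Finset.image_insert,
          Finset.map_eq_image, Finset.image_image]
        simp [Function.comp_def]
      rw [this]
      ext x
      simp only [Finset.mem_union, Finset.mem_insert]
      tauto

/-- If `B` is a zero forcing set of `G` with `|B| = |V| - k`, then there is a Z-sequence
`(v 0, …, v (k-1))` with a witness sequence `(w 0, …, w (k-1))` whose set of witnesses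
is exactly `V \ B`. -/
theorem exists_zSeq_of_zeroForcingSet {V : Type*} [Fintype V] [DecidableEq V]
    (G : SimpleGraph V) (B : Finset V) (k : ℕ)
    (hB : IsZeroForcingSet G B) (hcard : B.card + k = Fintype.card V) :
    ∃ (v w : Fin k → V), IsZSeq G v ∧ IsWitnessSeq G v w ∧
      Finset.image w Finset.univ = Finset.univ \ B := by
  obtain ⟨m, u, w, P1, P2, P3, P4, P5⟩ := zf_chain G hB
  -- w is injective
  have hwinj : Function.Injective w := by
    intro i j hij
    by_contra hne
    rcases lt_or_gt_of_ne hne with h | h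
    · exact (P2 j).2 i h hij.symm
    · exact (P2 i).2 j h hij
  have hdisj : Disjoint B (Finset.image w Finset.univ) := by
    rw [Finset.disjoint_right]
    intro x hx
    obtain ⟨i, _, rfl⟩ := Finset.mem_image.mp hx
    exact (P2 i).1
  have hcardm : B.card + m = Fintype.card V := by
    have := congrArg Finset.card P5
    rw [Finset.card_union_of_disjoint hdisj,
      Finset.card_image_of_injective _ hwinj] at this
    simpa [Finset.card_univ] using this.symm
  have hkm : k = m := by omega
  subst hkm
  -- main properties
  have key : ∀ i j : Fin k, j < i → w i ≠ u j ∧ ¬ G.Adj (u j) (w i) := by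
    intro i j hji
    constructor
    · rcases P1 j with hj | ⟨j', hj', hjeq⟩
      · intro h; exact (P2 i).1 (h ▸ hj)
      · exact fun h => (P2 i).2 j' (hj'.trans hji) (h.trans hjeq)
    · intro hadj
      have hx : w i = w j := by
        refine P4 j (w i) hadj (P2 i).1 ?_
        intro j' hj'
        exact (P2 i).2 j' (hj'.trans hji)
      exact (P2 i).2 j hji hx
  refine ⟨u, w, ?_, ?_, ?_⟩
  · intro i
    exact ⟨w i, P3 i, fun j hj => key i j hj⟩
  · intro i
    exact ⟨P3 i, fun j hj => key i j hj⟩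
  · ext x
    simp only [Finset.mem_sdiff, Finset.mem_univ, true_and]
    constructor
    · intro hx
      obtain ⟨i, _, rfl⟩ := Finset.mem_image.mp hx
      exact (P2 i).1
    · intro hx
      have : x ∈ B ∪ Finset.image w Finset.univ := by
        rw [← P5]; exact Finset.mem_univ x
      rcases Finset.mem_union.mp this with h | h
      · exact absurd h hx
      · exact h
end

section
/- (Expander Mixing Lemma) Let G = (V,E) be an (n,d,λ)-graph and let U, W ⊆ V. Then |d|U||W|/n − e(U,W)| ≤ λ·√(|U||W|(1 − |U|/n)(1 − |W|/n)), where e(U,W) = |{(u,w) ∈ U × W : {u,w} ∈ E}| (edges with both endpoints in U ∩ W are counted twice). -/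
/-- `G` is an `(n,d,λ)`-graph: `d`-regular on its (finite) vertex set, and all
eigenvalues of its adjacency matrix other than one (the top eigenvalue `d`) have
absolute value at most `lam ≥ 0`. -/
def IsNDLGraph {V : Type*} [Fintype V] [DecidableEq V] (G : SimpleGraph V)
    [DecidableRel G.Adj] (d : ℕ) (lam : ℝ) : Prop :=
  0 ≤ lam ∧ G.IsRegularOfDegree d ∧
    ∃ (hA : (G.adjMatrix ℝ).IsHermitian) (i₀ : V),
      ∀ i : V, i ≠ i₀ → |hA.eigenvalues i| ≤ lam

/-- `ePairs G U W` is the number of ordered pairs `(u,w) ∈ U × W` with `{u,w}` an edge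
(edges with both endpoints in `U ∩ W` are counted twice). -/
def ePairs {V : Type*} [DecidableEq V] (G : SimpleGraph V) [DecidableRel G.Adj]
    (U W : Finset V) : ℕ :=
  ((U ×ˢ W).filter fun p => G.Adj p.1 p.2).card



open Finset Matrix

section helpers

set_option linter.unusedSectionVars false

variable {V : Type*} [Fintype V] [DecidableEq V]

private lemma cs_abs_sum (f g : V → ℝ) :
    ∑ i, |f i| * |g i| ≤ Real.sqrt (∑ i, f i ^ 2) * Real.sqrt (∑ i, g i ^ 2) := by
  have h := Finset.sum_mul_sq_le_sq_mul_sq Finset.univ (fun i => |f i|) (fun i => |g i|)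
  simp only [sq_abs] at h
  have h1 : (0:ℝ) ≤ ∑ i, |f i| * |g i| :=
    Finset.sum_nonneg fun i _ => mul_nonneg (abs_nonneg _) (abs_nonneg _)
  have h2 : (0:ℝ) ≤ ∑ i, f i ^ 2 := Finset.sum_nonneg fun i _ => sq_nonneg _
  rw [← Real.sqrt_mul h2]
  rw [show ∑ i, |f i| * |g i| = Real.sqrt ((∑ i, |f i| * |g i|)^2) by
    rw [Real.sqrt_sq h1]]
  exact Real.sqrt_le_sqrt h

private lemma dot_self_nonneg (x : V → ℝ) : 0 ≤ x ⬝ᵥ x :=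
  Finset.sum_nonneg fun i _ => mul_self_nonneg _

private lemma adj_mulVec_dot_le (G : SimpleGraph V) [DecidableRel G.Adj] {d : ℕ}
    (hreg : G.IsRegularOfDegree d) (y : V → ℝ) :
    (G.adjMatrix ℝ *ᵥ y) ⬝ᵥ (G.adjMatrix ℝ *ᵥ y) ≤ (d:ℝ)^2 * (y ⬝ᵥ y) := by
  have hdeg : ∀ u, (G.degree u : ℝ) = (d:ℝ) := fun u => by rw [hreg u]
  have step1 : ∀ v : V, ((G.adjMatrix ℝ *ᵥ y) v)^2 ≤ (d:ℝ) * ∑ u ∈ G.neighborFinset v, (y u)^2 := by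
    intro v
    rw [SimpleGraph.adjMatrix_mulVec_apply]
    have := sq_sum_le_card_mul_sum_sq (s := G.neighborFinset v) (f := y)
    rwa [SimpleGraph.card_neighborFinset_eq_degree, hreg v] at this
  calc (G.adjMatrix ℝ *ᵥ y) ⬝ᵥ (G.adjMatrix ℝ *ᵥ y)
      = ∑ v, ((G.adjMatrix ℝ *ᵥ y) v)^2 := by simp [dotProduct, sq]
    _ ≤ ∑ v, (d:ℝ) * ∑ u ∈ G.neighborFinset v, (y u)^2 :=
        Finset.sum_le_sum fun v _ => step1 v
    _ = (d:ℝ) * ∑ v, ∑ u ∈ G.neighborFinset v, (y u)^2 := by rw [← Finset.mul_sum]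
    _ = (d:ℝ) * ∑ u, (G.degree u : ℝ) * (y u)^2 := by
        congr 1
        simp_rw [SimpleGraph.neighborFinset_eq_filter, Finset.sum_filter]
        rw [Finset.sum_comm]
        refine Finset.sum_congr rfl fun u _ => ?_
        rw [← Finset.sum_filter, Finset.sum_const, nsmul_eq_mul]
        congr 2
        rw [SimpleGraph.degree, SimpleGraph.neighborFinset_eq_filter]
        congr 1
        exact Finset.filter_congr fun v _ => by rw [SimpleGraph.adj_comm]
    _ = (d:ℝ)^2 * (y ⬝ᵥ y) := by
        simp_rw [hdeg]
        rw [dotProduct, Finset.mul_sum, Finset.mul_sum]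
        congr 1; ext u; ring

end helpers


section key

set_option linter.unusedSectionVars false

variable {V : Type*} [Fintype V] [DecidableEq V]

private lemma sum_dotProduct' {ι : Type*} (s : Finset ι) (f : ι → V → ℝ) (x : V → ℝ) :
    (∑ i ∈ s, f i) ⬝ᵥ x = ∑ i ∈ s, f i ⬝ᵥ x := by
  simp only [dotProduct, Finset.sum_apply, Finset.sum_mul]
  exact Finset.sum_comm

private lemma dotProduct_sum' {ι : Type*} (s : Finset ι) (x : V → ℝ) (f : ι → V → ℝ) :
    x ⬝ᵥ (∑ i ∈ s, f i) = ∑ i ∈ s, x ⬝ᵥ f i := by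
  simp only [dotProduct, Finset.sum_apply, Finset.mul_sum]
  exact Finset.sum_comm

private lemma mulVec_sum' {ι : Type*} (A : Matrix V V ℝ) (s : Finset ι) (f : ι → V → ℝ) :
    A *ᵥ (∑ i ∈ s, f i) = ∑ i ∈ s, A *ᵥ f i := by
  funext v
  simp only [Matrix.mulVec, dotProduct_sum', Finset.sum_apply]

private lemma expand_basis (B : OrthonormalBasis V ℝ (EuclideanSpace ℝ V)) (z : V → ℝ) :
    ∑ i, (⇑(B i) ⬝ᵥ z) • ⇑(B i) = z := by
  have h := B.sum_repr' ((WithLp.equiv 2 (V → ℝ)).symm z)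
  have h2 : ∀ i, (inner ℝ (B i) ((WithLp.equiv 2 (V → ℝ)).symm z) : ℝ) = ⇑(B i) ⬝ᵥ z := by
    intro i
    simp [PiLp.inner_apply, dotProduct, RCLike.inner_apply]
    exact Finset.sum_congr rfl fun _ _ => mul_comm _ _
  simp_rw [h2] at h
  simpa [WithLp.ofLp_sum] using congrArg WithLp.ofLp h

private lemma dot_bound (G : SimpleGraph V) [DecidableRel G.Adj] {d : ℕ} {lam : ℝ}
    (hlam : 0 ≤ lam) (hreg : G.IsRegularOfDegree d)
    (hA : (G.adjMatrix ℝ).IsHermitian) (i₀ : V)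
    (hb : ∀ i : V, i ≠ i₀ → |hA.eigenvalues i| ≤ lam)
    (x y : V → ℝ) (hx : x ⬝ᵥ (fun _ => (1:ℝ)) = 0) :
    |x ⬝ᵥ (G.adjMatrix ℝ *ᵥ y)| ≤ lam * (Real.sqrt (x ⬝ᵥ x) * Real.sqrt (y ⬝ᵥ y)) := by
  set A := G.adjMatrix ℝ with hAdef
  rcases le_or_gt (d:ℝ) lam with hd | hd
  · have h3 : Real.sqrt (∑ v, ((A *ᵥ y) v)^2) ≤ (d:ℝ) * Real.sqrt (y ⬝ᵥ y) := by
      have h4 : ∑ v, ((A *ᵥ y) v)^2 = (A *ᵥ y) ⬝ᵥ (A *ᵥ y) := by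
        simp [dotProduct, sq]
      rw [h4]
      have := Real.sqrt_le_sqrt (adj_mulVec_dot_le G hreg y)
      rwa [Real.sqrt_mul (by positivity), Real.sqrt_sq (by positivity)] at this
    have hxx : ∑ v, (x v)^2 = x ⬝ᵥ x := by simp [dotProduct, sq]
    calc |x ⬝ᵥ (A *ᵥ y)| ≤ ∑ v, |x v| * |(A *ᵥ y) v| := by
          rw [dotProduct]
          exact (Finset.abs_sum_le_sum_abs _ _).trans (le_of_eq (by simp [abs_mul]))
      _ ≤ Real.sqrt (∑ v, (x v)^2) * Real.sqrt (∑ v, ((A *ᵥ y) v)^2) := cs_abs_sum x _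
      _ ≤ Real.sqrt (x ⬝ᵥ x) * ((d:ℝ) * Real.sqrt (y ⬝ᵥ y)) := by
          rw [hxx]
          exact mul_le_mul_of_nonneg_left h3 (Real.sqrt_nonneg _)
      _ ≤ lam * (Real.sqrt (x ⬝ᵥ x) * Real.sqrt (y ⬝ᵥ y)) := by
          rw [show Real.sqrt (x ⬝ᵥ x) * ((d:ℝ) * Real.sqrt (y ⬝ᵥ y))
              = (d:ℝ) * (Real.sqrt (x ⬝ᵥ x) * Real.sqrt (y ⬝ᵥ y)) by ring]
          exact mul_le_mul_of_nonneg_right hd (by positivity)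
  · cases isEmpty_or_nonempty V with
    | inl hV => simp [dotProduct]
    | inr hV =>
      set B := hA.eigenvectorBasis with hBdef
      set μ := hA.eigenvalues with hμdef
      set o : V → ℝ := fun _ => 1 with hodef
      have hAo : A *ᵥ o = (d:ℝ) • o := by
        funext v
        rw [hAdef]
        simp [hodef, hreg v]
      set rx : V → ℝ := fun i => ⇑(B i) ⬝ᵥ x with hrx
      set ry : V → ℝ := fun i => ⇑(B i) ⬝ᵥ y with hry
      set c : V → ℝ := fun i => ⇑(B i) ⬝ᵥ o with hc
      have hoe := expand_basis B o
      have hsym : ∀ (u w : V → ℝ), u ⬝ᵥ (A *ᵥ w) = (A *ᵥ u) ⬝ᵥ w := by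
        intro u w
        rw [Matrix.dotProduct_mulVec, ← Matrix.mulVec_transpose]
        congr 1
        rw [show Aᵀ = A from by ext i j; simpa using hA.apply i j]
      have hcz : ∀ i, i ≠ i₀ → c i = 0 := by
        intro i hi
        have h1 : ⇑(B i) ⬝ᵥ (A *ᵥ o) = (d:ℝ) * c i := by
          rw [hAo, dotProduct_smul, smul_eq_mul]
        have h2 : ⇑(B i) ⬝ᵥ (A *ᵥ o) = μ i * c i := by
          rw [hsym, hA.mulVec_eigenvectorBasis, smul_dotProduct, smul_eq_mul]
        have h3 : (μ i - (d:ℝ)) * c i = 0 := by rw [sub_mul, h2.symm.trans h1]; ring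
        rcases mul_eq_zero.1 h3 with h | h
        · exfalso
          have h5 : |μ i| < (d:ℝ) := lt_of_le_of_lt (hb i hi) hd
          have h6 : μ i ≠ (d:ℝ) := fun he => by
            rw [he, abs_of_nonneg (by positivity)] at h5; exact lt_irrefl _ h5
          exact h6 (by linarith [sub_eq_zero.1 h])
        · exact h
      have hoeq : o = c i₀ • ⇑(B i₀) := by
        conv_lhs => rw [← hoe]
        rw [Finset.sum_eq_single i₀
          (fun i _ hi => by rw [show ⇑(B i) ⬝ᵥ o = c i from rfl, hcz i hi, zero_smul])
          (fun h => absurd (Finset.mem_univ i₀) h)]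
      obtain ⟨v⟩ := hV
      have hci₀ : c i₀ ≠ 0 := by
        intro h
        have h7 := congrFun hoeq v
        rw [h, zero_smul] at h7
        simpa [hodef] using h7
      have hrxz : rx i₀ = 0 := by
        have h1 : x ⬝ᵥ o = c i₀ * rx i₀ := by
          rw [hoeq, dotProduct_smul, smul_eq_mul, dotProduct_comm]
        rw [hx] at h1
        exact (mul_eq_zero.1 h1.symm).resolve_left hci₀
      have hmain : x ⬝ᵥ (A *ᵥ y) = ∑ j, μ j * rx j * ry j := by
        conv_lhs => rw [← expand_basis B y]
        rw [mulVec_sum']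
        simp_rw [Matrix.mulVec_smul]
        rw [Finset.sum_congr rfl fun j _ => by rw [hA.mulVec_eigenvectorBasis j]]
        rw [dotProduct_sum']
        refine Finset.sum_congr rfl fun j _ => ?_
        rw [dotProduct_smul, dotProduct_smul, smul_eq_mul, smul_eq_mul,
          dotProduct_comm x]
        show ry j * (μ j * rx j) = μ j * rx j * ry j
        ring
      have hpar : ∀ z : V → ℝ, z ⬝ᵥ z = ∑ i, ((⇑(B i) ⬝ᵥ z))^2 := by
        intro z
        calc z ⬝ᵥ z = (∑ i, (⇑(B i) ⬝ᵥ z) • ⇑(B i)) ⬝ᵥ z := by rw [expand_basis B z]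
          _ = ∑ i, ((⇑(B i) ⬝ᵥ z))^2 := by
              rw [sum_dotProduct']
              refine Finset.sum_congr rfl fun i _ => ?_
              rw [smul_dotProduct, smul_eq_mul, sq]
      rw [hmain]
      calc |∑ j, μ j * rx j * ry j| ≤ ∑ j, |μ j * rx j * ry j| :=
            Finset.abs_sum_le_sum_abs _ _
        _ ≤ ∑ j, lam * (|rx j| * |ry j|) := by
            refine Finset.sum_le_sum fun j _ => ?_
            rcases eq_or_ne j i₀ with rfl | hj
            · rw [hrxz, mul_zero, zero_mul, abs_zero]
              positivity
            · rw [abs_mul, abs_mul, mul_assoc]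
              exact mul_le_mul_of_nonneg_right (hb j hj) (by positivity)
        _ = lam * ∑ j, |rx j| * |ry j| := by rw [← Finset.mul_sum]
        _ ≤ lam * (Real.sqrt (∑ j, (rx j)^2) * Real.sqrt (∑ j, (ry j)^2)) :=
            mul_le_mul_of_nonneg_left (cs_abs_sum rx ry) hlam
        _ = lam * (Real.sqrt (x ⬝ᵥ x) * Real.sqrt (y ⬝ᵥ y)) := by
            rw [hpar x, hpar y]

end key

/-- Expander Mixing Lemma: for an `(n,d,λ)`-graph `G` and vertex subsets `U, W`,
`|d|U||W|/n − e(U,W)| ≤ λ √(|U||W|(1 − |U|/n)(1 − |W|/n))`. -/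


theorem expander_mixing_lemma {V : Type*} [Fintype V] [DecidableEq V]
    (G : SimpleGraph V) [DecidableRel G.Adj] (d : ℕ) (lam : ℝ)
    (hG : IsNDLGraph G d lam) (U W : Finset V) :
    |(d : ℝ) * U.card * W.card / Fintype.card V - (ePairs G U W : ℝ)| ≤
      lam * Real.sqrt ((U.card : ℝ) * W.card *
        (1 - (U.card : ℝ) / Fintype.card V) * (1 - (W.card : ℝ) / Fintype.card V)) := by
  obtain ⟨hlam, hreg, hA, i₀, hb⟩ := hG
  rcases Nat.eq_zero_or_pos (Fintype.card V) with hn0 | hn0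
  · haveI : IsEmpty V := Fintype.card_eq_zero_iff.mp hn0
    have hU : U = ∅ := Finset.eq_empty_of_isEmpty U
    have hW : W = ∅ := Finset.eq_empty_of_isEmpty W
    rw [hU, hW]
    simp [ePairs]
  · set A := G.adjMatrix ℝ with hAdef
    set nR : ℝ := (Fintype.card V : ℝ) with hnR
    have hnRpos : 0 < nR := by rw [hnR]; exact_mod_cast hn0
    set o : V → ℝ := fun _ => 1 with ho
    set χU : V → ℝ := fun v => if v ∈ U then 1 else 0 with hχU
    set χW : V → ℝ := fun v => if v ∈ W then 1 else 0 with hχW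
    set x : V → ℝ := χU - ((U.card : ℝ)/nR) • o with hxdef
    set y : V → ℝ := χW - ((W.card : ℝ)/nR) • o with hydef
    have hUo : χU ⬝ᵥ o = (U.card : ℝ) := by
      simp [dotProduct, hχU, ho]
    have hoU : o ⬝ᵥ χU = (U.card : ℝ) := by rw [dotProduct_comm]; exact hUo
    have hWo : χW ⬝ᵥ o = (W.card : ℝ) := by
      simp [dotProduct, hχW, ho]
    have hoW : o ⬝ᵥ χW = (W.card : ℝ) := by rw [dotProduct_comm]; exact hWo
    have hUU : χU ⬝ᵥ χU = (U.card : ℝ) := by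
      simp [dotProduct, hχU, ite_and]
    have hWW : χW ⬝ᵥ χW = (W.card : ℝ) := by
      simp [dotProduct, hχW, ite_and]
    have hoo : o ⬝ᵥ o = nR := by
      simp [dotProduct, ho, hnR]
    have hAo : A *ᵥ o = (d:ℝ) • o := by
      funext v
      rw [hAdef]
      simp [ho, hreg v]
    have hsym : ∀ (u w : V → ℝ), u ⬝ᵥ (A *ᵥ w) = (A *ᵥ u) ⬝ᵥ w := by
      intro u w
      rw [Matrix.dotProduct_mulVec, ← Matrix.mulVec_transpose]
      congr 1
      rw [show Aᵀ = A from by ext i j; simpa using hA.apply i j]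
    have hoAW : o ⬝ᵥ (A *ᵥ χW) = (d:ℝ) * (W.card : ℝ) := by
      rw [hsym, hAo, smul_dotProduct, smul_eq_mul, hoW]
    have he : (ePairs G U W : ℝ) = χU ⬝ᵥ (A *ᵥ χW) := by
      have e1 : (ePairs G U W : ℝ) = ∑ u ∈ U, ∑ w ∈ W, A u w := by
        rw [ePairs, Finset.card_filter]
        push_cast
        rw [Finset.sum_product]
        refine Finset.sum_congr rfl fun u _ => Finset.sum_congr rfl fun w _ => ?_
        rw [hAdef]
        simp
      have e2 : χU ⬝ᵥ (A *ᵥ χW) = ∑ u ∈ U, ∑ w ∈ W, A u w := by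
        show ∑ v, χU v * (∑ w, A v w * χW w) = _
        simp only [hχU, hχW, ite_mul, one_mul, zero_mul, mul_ite, mul_one, mul_zero]
        rw [Finset.sum_ite_mem, Finset.univ_inter]
        refine Finset.sum_congr rfl fun u _ => ?_
        rw [Finset.sum_ite_mem, Finset.univ_inter]
      rw [e1, e2]
    have hxo : x ⬝ᵥ o = 0 := by
      rw [hxdef, sub_dotProduct, smul_dotProduct, hUo, hoo, smul_eq_mul]
      field_simp
      ring
    have hdot : x ⬝ᵥ (A *ᵥ y) = χU ⬝ᵥ (A *ᵥ χW) - (d:ℝ) * U.card * W.card / nR := by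
      simp only [hxdef, hydef, Matrix.mulVec_sub, Matrix.mulVec_smul, hAo,
        sub_dotProduct, dotProduct_sub, smul_dotProduct,
        dotProduct_smul, smul_eq_mul, hUo, hoo, hoAW, hoW]
      field_simp
      ring
    have hxx : x ⬝ᵥ x = (U.card : ℝ) * (1 - (U.card : ℝ)/nR) := by
      simp only [hxdef, sub_dotProduct, dotProduct_sub, smul_dotProduct,
        dotProduct_smul, smul_eq_mul, hUU, hUo, hoU, hoo]
      field_simp
      ring
    have hyy : y ⬝ᵥ y = (W.card : ℝ) * (1 - (W.card : ℝ)/nR) := by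
      simp only [hydef, sub_dotProduct, dotProduct_sub, smul_dotProduct,
        dotProduct_smul, smul_eq_mul, hWW, hWo, hoW, hoo]
      field_simp
      ring
    have hkey := dot_bound G hlam hreg hA i₀ hb x y hxo
    have h1 : (d:ℝ) * U.card * W.card / nR - (ePairs G U W : ℝ) = -(x ⬝ᵥ (A *ᵥ y)) := by
      rw [hdot, he]; ring
    rw [h1, abs_neg]
    rw [show (U.card : ℝ) * W.card * (1 - (U.card : ℝ)/nR) * (1 - (W.card : ℝ)/nR)
        = (x ⬝ᵥ x) * (y ⬝ᵥ y) from by rw [hxx, hyy]; ring]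
    rw [Real.sqrt_mul (dot_self_nonneg x)]
    exact hkey
end

section
/- Let G be a finite simple graph on n vertices and q a positive integer. If G contains no q-bipartite hole, i.e., there do not exist two disjoint sets of q vertices each with no edges of G between them, then the zero forcing number satisfies Z(G) ≥ n − 2q. -/
/-- `G` has a `q`-bipartite hole: two disjoint sets of `q` vertices each with no edges
of `G` between them. -/
def HasBipartiteHole {V : Type*} (G : SimpleGraph V) (q : ℕ) : Prop :=
  ∃ A B : Finset V, A.card = q ∧ B.card = q ∧ Disjoint A B ∧
    ∀ a ∈ A, ∀ b ∈ B, ¬ G.Adj a b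

/-- From a reflexive-transitive chain of zero forcing steps we can extract the full
chain structure: the intermediate sets `C i` together with forcing vertices `v i`
and forced vertices `w i`. -/
lemma chain_of_forcing {V : Type*} [DecidableEq V] [Nonempty V] (G : SimpleGraph V)
    {S T : Finset V} (h : Relation.ReflTransGen (zfStep G) S T) :
    ∃ (k : ℕ) (v w : ℕ → V) (C : ℕ → Finset V), C 0 = S ∧ C k = T ∧
      ∀ i < k, v i ∈ C i ∧ w i ∉ C i ∧ G.Adj (v i) (w i) ∧
        (∀ u, G.Adj (v i) u → u ∉ C i → u = w i) ∧ C (i+1) = insert (w i) (C i) := by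
  induction h with
  | refl =>
      exact ⟨0, fun _ => Classical.arbitrary V, fun _ => Classical.arbitrary V,
        fun _ => S, rfl, rfl, fun i hi => absurd hi (Nat.not_lt_zero i)⟩
  | @tail T T' _ hstep ih =>
      obtain ⟨k, v, w, C, hC0, hCk, hP⟩ := ih
      obtain ⟨v', hv', w', hw', hadj, huniq, hT'⟩ := hstep
      refine ⟨k + 1, fun i => if i = k then v' else v i,
        fun i => if i = k then w' else w i,
        fun i => if i ≤ k then C i else T', by simp [hC0], by simp, ?_⟩
      intro i hi
      rcases Nat.lt_or_ge i k with hik | hik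
      · have h1 : i ≠ k := Nat.ne_of_lt hik
        have h2 : i ≤ k := Nat.le_of_lt hik
        have h3 : i + 1 ≤ k := hik
        obtain ⟨a, b, c, d, e⟩ := hP i hik
        simp only [if_neg h1, if_pos h2, if_pos h3]
        exact ⟨a, b, c, d, e⟩
      · have hik' : i = k := Nat.le_antisymm (Nat.lt_succ_iff.mp hi) hik
        subst hik'
        have h4 : ¬ (i + 1 ≤ i) := by omega
        simp only [if_pos rfl, if_pos (le_refl i), if_neg h4, hCk]
        exact ⟨hv', hw', hadj, huniq, hT'⟩

/-- Any zero forcing set `S` gives a Z-sequence of length `|univ| - |S|`. -/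
lemma zseq_of_forcing {V : Type*} [DecidableEq V] [Fintype V] [Nonempty V]
    (G : SimpleGraph V) {S : Finset V} (hS : IsZeroForcingSet G S) :
    ∃ (k : ℕ) (v : Fin k → V), IsZSeq G v ∧ S.card + k = Fintype.card V := by
  obtain ⟨k, v, w, C, hC0, hCk, hP⟩ := chain_of_forcing G hS
  -- monotonicity of the chain
  have hmono : ∀ i j, i ≤ j → j ≤ k → C i ⊆ C j := by
    intro i j hij hjk
    induction j with
    | zero => simpa [Nat.le_zero.mp hij] using Finset.Subset.refl _
    | succ m ihm =>
        rcases Nat.lt_or_ge i (m+1) with him | him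
        · have hm : i ≤ m := Nat.lt_succ_iff.mp him
          have hmk : m ≤ k := Nat.le_of_succ_le hjk
          have h1 : C i ⊆ C m := ihm hm hmk
          have h2 := (hP m (Nat.lt_of_succ_le hjk)).2.2.2.2
          rw [h2]
          exact h1.trans (Finset.subset_insert _ _)
        · have : i = m + 1 := Nat.le_antisymm hij him
          simp [this]
  -- cardinality
  have hcard : ∀ i ≤ k, (C i).card = S.card + i := by
    intro i
    induction i with
    | zero => simp [hC0]
    | succ m ihm =>
        intro hm
        obtain ⟨_, hwni, _, _, hins⟩ := hP m (Nat.lt_of_succ_le hm)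
        rw [hins, Finset.card_insert_of_notMem hwni, ihm (Nat.le_of_succ_le hm)]
        omega
  refine ⟨k, fun i => v i, ?_, ?_⟩
  · intro i
    obtain ⟨hvi, hwi, hadj, huniq, hins⟩ := hP i i.2
    refine ⟨w i, hadj, ?_⟩
    intro j hji
    have hji' : (j : ℕ) < (i : ℕ) := hji
    obtain ⟨hvj, hwj, hadjj, huniqj, hinsj⟩ := hP j (lt_trans hji' i.2)
    have hsub : C ((j : ℕ) + 1) ⊆ C i :=
      hmono _ _ hji' (Nat.le_of_lt i.2)
    have hwiCj1 : w i ∉ C ((j : ℕ) + 1) := fun hmem => hwi (hsub hmem)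
    rw [hinsj] at hwiCj1
    have hne : w i ≠ w j := fun he => hwiCj1 (by rw [he]; exact Finset.mem_insert_self _ _)
    have hwiCj : w i ∉ C j := fun hmem => hwiCj1 (Finset.mem_insert_of_mem hmem)
    constructor
    · intro he; exact hwiCj (he ▸ hvj)
    · intro hadj'
      exact hne (huniqj _ hadj' hwiCj)
  · have := hcard k (le_refl k)
    rw [hCk] at this
    simp [Finset.card_univ] at this
    omega

/-- A Z-sequence of length at least `2q` yields a `q`-bipartite hole. -/
lemma hole_of_long_zseq {V : Type*} (G : SimpleGraph V) {q m : ℕ}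
    {v : Fin m → V} (hv : IsZSeq G v) (hm : 2 * q ≤ m) :
    HasBipartiteHole G q := by
  classical
  choose w hw1 hw2 using hv
  -- key facts
  have key : ∀ a b : Fin m, a < b → w b ≠ v a ∧ ¬ G.Adj (v a) (w b) := fun a b hab => hw2 b a hab
  have hwne : ∀ a b : Fin m, a < b → w a ≠ w b := by
    intro a b hab he
    exact (key a b hab).2 (he ▸ hw1 a)
  set f : Fin q → V := fun i => v ⟨(i : ℕ), by omega⟩ with hf
  set g : Fin q → V := fun i => w ⟨q + (i : ℕ), by omega⟩ with hg
  have hfinj : Function.Injective f := by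
    intro a b hab
    by_contra hne
    have hvne : ∀ c d : Fin m, c < d → v c ≠ v d := by
      intro c d hcd he
      exact (key c d hcd).2 (he ▸ hw1 d)
    rcases lt_trichotomy (a : ℕ) (b : ℕ) with hlt | heq | hgt
    · exact hvne ⟨a, by omega⟩ ⟨b, by omega⟩ hlt hab
    · exact hne (Fin.ext heq)
    · exact hvne ⟨b, by omega⟩ ⟨a, by omega⟩ hgt hab.symm
  have hginj : Function.Injective g := by
    intro a b hab
    by_contra hne
    rcases lt_trichotomy (a : ℕ) (b : ℕ) with hlt | heq | hgt
    · exact hwne ⟨q + a, by omega⟩ ⟨q + b, by omega⟩ (by rw [Fin.lt_def]; simp; omega) hab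
    · exact hne (Fin.ext heq)
    · exact hwne ⟨q + b, by omega⟩ ⟨q + a, by omega⟩ (by rw [Fin.lt_def]; simp; omega) hab.symm
  refine ⟨Finset.univ.image f, Finset.univ.image g, ?_, ?_, ?_, ?_⟩
  · rw [Finset.card_image_of_injective _ hfinj, Finset.card_univ, Fintype.card_fin]
  · rw [Finset.card_image_of_injective _ hginj, Finset.card_univ, Fintype.card_fin]
  · rw [Finset.disjoint_left]
    rintro x hx hx'
    simp only [Finset.mem_image, Finset.mem_univ, true_and] at hx hx'
    obtain ⟨i, hi⟩ := hx
    obtain ⟨j, hj⟩ := hx'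
    exact (key ⟨i, by omega⟩ ⟨q + j, by omega⟩ (by rw [Fin.lt_def]; simp; omega)).1 (hj.trans hi.symm)
  · intro a ha b hb
    simp only [Finset.mem_image, Finset.mem_univ, true_and] at ha hb
    obtain ⟨i, rfl⟩ := ha
    obtain ⟨j, rfl⟩ := hb
    exact (key ⟨i, by omega⟩ ⟨q + j, by omega⟩ (by rw [Fin.lt_def]; simp; omega)).2

/-- If a finite simple graph `G` on `n` vertices contains no `q`-bipartite hole
(`q > 0`), then `Z(G) ≥ n − 2q`. -/
theorem zeroForcingNumber_ge_of_no_hole {V : Type*} [Fintype V] [DecidableEq V]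
    (G : SimpleGraph V) (q : ℕ) (hq : 0 < q) (h : ¬ HasBipartiteHole G q) :
    Fintype.card V - 2 * q ≤ zeroForcingNumber G := by
  cases isEmpty_or_nonempty V with
  | inl hempty => simp [Fintype.card_eq_zero]
  | inr hne =>
      apply le_csInf
      · exact ⟨Finset.univ.card, Finset.univ, Relation.ReflTransGen.refl, rfl⟩
      · rintro n ⟨S, hS, rfl⟩
        obtain ⟨k, v, hv, hcard⟩ := zseq_of_forcing G hS
        have hk : k < 2 * q := by
          by_contra hk'
          exact h (hole_of_long_zseq G hv (le_of_not_gt hk'))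
        omega
end

section
/- Let G be a finite simple graph, let S = (v_1,…,v_{2q}) be a Z-sequence of G of length 2q, and let W = (w_1,…,w_{2q}) be a witness sequence for S. Then the sets A = {v_1,…,v_q} and B = {w_{q+1},…,w_{2q}} satisfy |A| = |B| = q, A ∩ B = ∅, and there is no edge of G with one endpoint in A and the other in B; that is, A and B form a q-bipartite hole. -/
/-- If `(v 0, …, v (2q-1))` is a Z-sequence of `G` with witness sequence
`(w 0, …, w (2q-1))`, then `A = {v 0, …, v (q-1)}` and `B = {w q, …, w (2q-1)}` form a
`q`-bipartite hole: `|A| = |B| = q`, `A ∩ B = ∅`, and there is no edge between them. -/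
theorem zSeq_yields_bipartite_hole {V : Type*} [DecidableEq V] (G : SimpleGraph V)
    (q : ℕ) (v w : Fin (2 * q) → V) (hv : IsZSeq G v) (hw : IsWitnessSeq G v w)
    (A B : Finset V)
    (hA : A = (Finset.univ.filter fun i : Fin (2 * q) => (i : ℕ) < q).image v)
    (hB : B = (Finset.univ.filter fun i : Fin (2 * q) => q ≤ (i : ℕ)).image w) :
    A.card = q ∧ B.card = q ∧ Disjoint A B ∧ ∀ a ∈ A, ∀ b ∈ B, ¬ G.Adj a b := by
  have hvne : ∀ i j : Fin (2*q), i < j → v i ≠ v j := by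
    intro i j hij hEq
    exact ((hw j).2 i hij).2 (by rw [hEq]; exact (hw j).1)
  have hwne : ∀ i j : Fin (2*q), i < j → w i ≠ w j := by
    intro i j hij hEq
    have := (hw i).1
    rw [hEq] at this
    exact ((hw j).2 i hij).2 this
  subst hA hB
  have hcardA : ((Finset.univ.filter fun i : Fin (2 * q) => (i : ℕ) < q)).card = q := by
    conv_rhs => rw [← Finset.card_fin q]
    apply Finset.card_bij' (fun (a : Fin (2*q)) ha => (⟨(a : ℕ),
        (Finset.mem_filter.mp ha).2⟩ : Fin q))
      (fun (b : Fin q) _ => (⟨(b : ℕ), by have := b.2; omega⟩ : Fin (2*q)))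
    · intro a ha; simp
    · intro b hb; simp [b.2]
    · intro a ha; simp
    · intro b hb; simp
  have hcardB : ((Finset.univ.filter fun i : Fin (2 * q) => q ≤ (i : ℕ))).card = q := by
    conv_rhs => rw [← Finset.card_fin q]
    apply Finset.card_bij' (fun (a : Fin (2*q)) ha => (⟨(a : ℕ) - q, by
        have h1 := a.2
        have h2 : q ≤ (a : ℕ) := (Finset.mem_filter.mp ha).2
        omega⟩ : Fin q))
      (fun (b : Fin q) _ => (⟨q + (b : ℕ), by have := b.2; omega⟩ : Fin (2*q)))
    · intro a ha
      have h2 : q ≤ (a : ℕ) := by simpa using ha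
      simp [Fin.ext_iff]; omega
    · intro b hb; simp [Fin.ext_iff]
    · intro a ha; simp
    · intro b hb; simp
  refine ⟨?_, ?_, ?_, ?_⟩
  · rw [Finset.card_image_of_injOn, hcardA]
    intro i hi j hj hEq
    rcases lt_trichotomy i j with h | h | h
    · exact absurd hEq (hvne i j h)
    · exact h
    · exact absurd hEq.symm (hvne j i h)
  · rw [Finset.card_image_of_injOn, hcardB]
    intro i hi j hj hEq
    rcases lt_trichotomy i j with h | h | h
    · exact absurd hEq (hwne i j h)
    · exact h
    · exact absurd hEq.symm (hwne j i h)
  · rw [Finset.disjoint_left]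
    rintro a ha hb
    simp only [Finset.mem_image, Finset.mem_filter, Finset.mem_univ, true_and] at ha hb
    obtain ⟨i, hi, rfl⟩ := ha
    obtain ⟨j, hj, hEq⟩ := hb
    have hij : i < j := by rw [Fin.lt_def]; omega
    exact ((hw j).2 i hij).1 hEq
  · rintro a ha b hb hadj
    simp only [Finset.mem_image, Finset.mem_filter, Finset.mem_univ, true_and] at ha hb
    obtain ⟨i, hi, rfl⟩ := ha
    obtain ⟨j, hj, rfl⟩ := hb
    have hij : i < j := by rw [Fin.lt_def]; omega
    exact ((hw j).2 i hij).2 hadj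
end
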